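/- For every x > 0, ln(1+x) < √(1+2x) - 1. Consequently, for every n ≥ 1 and r > 0, (1 + r/n)^(n/2)·e^(-r/2) < exp(-(n/4)(√(1+2r/n) - 1)²), i.e., the m_∞-bound is strictly tighter than the relaxed LM bound. -/

import Mathlib

lemma aux_log_lt (x : ℝ) (hx : 0 < x) :
    Real.log (1 + x) < Real.sqrt (1 + 2 * x) - 1 := by
  have h : StrictMonoOn (fun y : ℝ => Real.sqrt (1 + 2 * y) - 1 - Real.log (1 + y))
      (Set.Ici 0) := by
    apply strictMonoOn_of_deriv_pos (convex_Ici 0)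
    · apply ContinuousOn.sub
      · apply ContinuousOn.sub
        · exact (Real.continuous_sqrt.comp (by continuity)).continuousOn
        · exact continuousOn_const
      · apply ContinuousOn.log
        · exact (continuous_const.add continuous_id).continuousOn
        · intro y hy
          have : (0:ℝ) ≤ y := hy
          nlinarith
    · intro y hy
      rw [interior_Ici] at hy
      have hy0 : (0:ℝ) < y := hy
      have h1 : (0:ℝ) < 1 + 2 * y := by linarith
      have h2 : (0:ℝ) < 1 + y := by linarith
      have hs : HasDerivAt (fun z : ℝ => Real.sqrt (1 + 2 * z))
          (2 / (2 * Real.sqrt (1 + 2 * y))) y := by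
        have h' : HasDerivAt (fun z : ℝ => 1 + 2 * z) 2 y := by
          simpa using ((hasDerivAt_id y).const_mul 2).const_add 1
        exact h'.sqrt h1.ne'
      have hl : HasDerivAt (fun z : ℝ => Real.log (1 + z)) (1 / (1 + y)) y := by
        have h' : HasDerivAt (fun z : ℝ => 1 + z) 1 y := by
          simpa using (hasDerivAt_id y).const_add 1
        simpa using h'.log h2.ne'
      have hd : HasDerivAt (fun z : ℝ => Real.sqrt (1 + 2 * z) - 1 - Real.log (1 + z))
          (2 / (2 * Real.sqrt (1 + 2 * y)) - 1 / (1 + y)) y := (hs.sub_const 1).sub hl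
      rw [hd.deriv]
      have hsq : Real.sqrt (1 + 2 * y) < 1 + y := by
        rw [show (1:ℝ) + y = Real.sqrt ((1 + y) ^ 2) from (Real.sqrt_sq h2.le).symm]
        apply Real.sqrt_lt_sqrt h1.le
        nlinarith
      have hsp : 0 < Real.sqrt (1 + 2 * y) := Real.sqrt_pos.mpr h1
      have : 2 / (2 * Real.sqrt (1 + 2 * y)) = 1 / Real.sqrt (1 + 2 * y) := by
        field_simp
      rw [this]
      have := one_div_lt_one_div_of_lt hsp hsq
      linarith
  have h0 : (fun y : ℝ => Real.sqrt (1 + 2 * y) - 1 - Real.log (1 + y)) 0 = 0 := by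
    simp
  have := h (Set.mem_Ici.mpr le_rfl) (Set.mem_Ici.mpr hx.le) hx
  rw [h0] at this
  simp only at this
  linarith

theorem stmt_14 :
    (∀ x : ℝ, 0 < x → Real.log (1 + x) < Real.sqrt (1 + 2 * x) - 1) ∧
    (∀ n : ℕ, 1 ≤ n → ∀ r : ℝ, 0 < r →
      (1 + r / n) ^ ((n : ℝ) / 2) * Real.exp (-r / 2) <
        Real.exp (-((n : ℝ) / 4) * (Real.sqrt (1 + 2 * r / n) - 1) ^ 2)) := by
  constructor
  · exact aux_log_lt
  · intro n hn r hr
    have hn0 : (0:ℝ) < n := by exact_mod_cast Nat.pos_of_ne_zero (by omega)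
    set x : ℝ := r / n with hxdef
    have hx : 0 < x := div_pos hr hn0
    have h1x : (0:ℝ) < 1 + x := by linarith
    have h2x : (0:ℝ) < 1 + 2 * x := by linarith
    have hxr : r = n * x := by rw [hxdef, mul_div_assoc', eq_div_iff hn0.ne', mul_comm]
    have h2rn : 2 * r / n = 2 * x := by rw [hxr]; field_simp
    have hkey := aux_log_lt x hx
    set s : ℝ := Real.sqrt (1 + 2 * x) with hsdef
    have hs2 : s ^ 2 = 1 + 2 * x := Real.sq_sqrt h2x.le
    rw [h2rn, Real.rpow_def_of_pos h1x, ← Real.exp_add, Real.exp_lt_exp]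
    rw [hxr]
    nlinarith [mul_lt_mul_of_pos_left hkey (by positivity : (0:ℝ) < (n:ℝ)/2)]
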